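/- Let Ω = (0, L) × (0, 1) ⊂ ℝ² with L > 0, e_g = (0, −1), u_s ∈ ℝ, κ > 0, Δt > 0, let y denote the second coordinate function and Γ₁ = {(x, 1)} the top wall. Let u : cl(Ω) → ℝ² be continuously differentiable with div u = 0 in Ω and u·n = 0 on ∂Ω, and let φ₁, φ₂ : cl(Ω) → ℝ be continuously differentiable; set m = (φ₁ + φ₂)/2 and u_p = u + u_s e_g. Suppose the midpoint-rule discrete transport equation tested against y holds: ∫_Ω ((φ₂ − φ₁)/Δt) y dx + ½ ∫_Ω div(u_p m) y dx − ½ ∫_Ω m div(u_p y) dx + (u_s/2) ∫_{Γ₁} m dΓ = −κ ∫_Ω ∇m·∇y dx. Then the discrete potential energy balance holds: ∫_Ω φ₂ y dx − ∫_Ω φ₁ y dx = −Δt ( u_s ∫_Ω m dx − κ ∫_Ω ∇m·e_g dx ) − Δt ∫_Ω m (u·e_g) dx. -/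

import Mathlib

open MeasureTheory Set

/-- Partial derivative in the first spatial direction. -/
noncomputable def d1 (f : ℝ × ℝ → ℝ) (x : ℝ × ℝ) : ℝ := fderiv ℝ f x ((1 : ℝ), (0 : ℝ))

/-- Partial derivative in the second spatial direction. -/
noncomputable def d2 (f : ℝ × ℝ → ℝ) (x : ℝ × ℝ) : ℝ := fderiv ℝ f x ((0 : ℝ), (1 : ℝ))

/-- Gradient of a scalar field on `ℝ²`. -/
noncomputable def grad (f : ℝ × ℝ → ℝ) (x : ℝ × ℝ) : ℝ × ℝ := (d1 f x, d2 f x)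

/-- Divergence of a vector field on `ℝ²`. -/
noncomputable def div2 (w : ℝ × ℝ → ℝ × ℝ) (x : ℝ × ℝ) : ℝ :=
  d1 (fun y => (w y).1) x + d2 (fun y => (w y).2) x

/-- Laplacian of a scalar field on `ℝ²`. -/
noncomputable def lap (f : ℝ × ℝ → ℝ) (x : ℝ × ℝ) : ℝ := d1 (d1 f) x + d2 (d2 f) x

/-- Dot product on `ℝ²`. -/
def dot (a b : ℝ × ℝ) : ℝ := a.1 * b.1 + a.2 * b.2

/-- Unit vector in the direction of gravity. -/
noncomputable def eg : ℝ × ℝ := ((0 : ℝ), (-1 : ℝ))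

lemma d1_mul {a b : ℝ × ℝ → ℝ} {x : ℝ × ℝ} (ha : DifferentiableAt ℝ a x)
    (hb : DifferentiableAt ℝ b x) :
    d1 (fun y => a y * b y) x = d1 a x * b x + a x * d1 b x := by
  simp only [d1, fderiv_fun_mul ha hb, ContinuousLinearMap.add_apply,
    ContinuousLinearMap.smul_apply, smul_eq_mul]
  ring

lemma d2_mul {a b : ℝ × ℝ → ℝ} {x : ℝ × ℝ} (ha : DifferentiableAt ℝ a x)
    (hb : DifferentiableAt ℝ b x) :
    d2 (fun y => a y * b y) x = d2 a x * b x + a x * d2 b x := by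
  simp only [d2, fderiv_fun_mul ha hb, ContinuousLinearMap.add_apply,
    ContinuousLinearMap.smul_apply, smul_eq_mul]
  ring

lemma d1_snd (x : ℝ × ℝ) : d1 (fun y : ℝ × ℝ => y.2) x = 0 := by
  simp [d1, fderiv_snd]

lemma d2_snd (x : ℝ × ℝ) : d2 (fun y : ℝ × ℝ => y.2) x = 1 := by
  simp [d2, fderiv_snd]

lemma d1_sub_const {a : ℝ × ℝ → ℝ} (c : ℝ) (x : ℝ × ℝ) :
    d1 (fun y => a y - c) x = d1 a x := by
  simp [d1, fderiv_sub_const]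

lemma d2_sub_const {a : ℝ × ℝ → ℝ} (c : ℝ) (x : ℝ × ℝ) :
    d2 (fun y => a y - c) x = d2 a x := by
  simp [d2, fderiv_sub_const]

lemma cont_d1 {f : ℝ × ℝ → ℝ} (hf : ContDiff ℝ 1 f) : Continuous (d1 f) := by
  have h := hf.continuous_fderiv one_ne_zero
  exact (ContinuousLinearMap.apply ℝ ℝ ((1 : ℝ), (0 : ℝ))).continuous.comp h

lemma cont_d2 {f : ℝ × ℝ → ℝ} (hf : ContDiff ℝ 1 f) : Continuous (d2 f) := by
  have h := hf.continuous_fderiv one_ne_zero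
  exact (ContinuousLinearMap.apply ℝ ℝ ((0 : ℝ), (1 : ℝ))).continuous.comp h

lemma integrableOn_rect {f : ℝ × ℝ → ℝ} (hf : Continuous f) {a b c d : ℝ} :
    IntegrableOn f (Ioo a b ×ˢ Ioo c d) := by
  have h : IntegrableOn f (Icc a b ×ˢ Icc c d) :=
    hf.continuousOn.integrableOn_compact (isCompact_Icc.prod isCompact_Icc)
  exact h.mono_set (prod_mono Ioo_subset_Icc_self Ioo_subset_Icc_self)

lemma integrableOn_rect' {f : ℝ × ℝ → ℝ} (hf : Continuous f) {a b c d : ℝ} :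
    IntegrableOn f (Icc a b ×ˢ Icc c d) :=
  hf.continuousOn.integrableOn_compact (isCompact_Icc.prod isCompact_Icc)

lemma key_div (L u_s : ℝ) (hL : 0 < L) (u : ℝ × ℝ → ℝ × ℝ) (m : ℝ × ℝ → ℝ)
    (hu : ContDiff ℝ 1 u) (hm : ContDiff ℝ 1 m)
    (hdiv : ∀ x ∈ Ioo 0 L ×ˢ Ioo (0 : ℝ) 1, div2 u x = 0)
    (htop : ∀ x ∈ Icc 0 L, (u (x, 1)).2 = 0)
    (hleft : ∀ y ∈ Icc (0 : ℝ) 1, (u (0, y)).1 = 0)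
    (hright : ∀ y ∈ Icc (0 : ℝ) 1, (u (L, y)).1 = 0) :
    (∫ x in Ioo 0 L ×ˢ Ioo (0 : ℝ) 1,
      ((d1 m x * (u x).1 + d2 m x * ((u x).2 - u_s)) * x.2 + m x * ((u x).2 - u_s)))
    = -u_s * ∫ x in Ioo 0 L, m (x, 1) := by
  set f : ℝ × ℝ → ℝ := fun p => p.2 * (m p * (u p).1) with hfdef
  set g : ℝ × ℝ → ℝ := fun p => p.2 * (m p * ((u p).2 - u_s)) with hgdef
  have hu1 : ContDiff ℝ 1 (fun y : ℝ × ℝ => (u y).1) := contDiff_fst.comp hu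
  have hu2 : ContDiff ℝ 1 (fun y : ℝ × ℝ => (u y).2) := contDiff_snd.comp hu
  have hu2' : ContDiff ℝ 1 (fun y : ℝ × ℝ => (u y).2 - u_s) := hu2.sub contDiff_const
  have hf : ContDiff ℝ 1 f := contDiff_snd.mul (hm.mul hu1)
  have hg : ContDiff ℝ 1 g := contDiff_snd.mul (hm.mul hu2')
  have dm : ∀ x, DifferentiableAt ℝ m x := fun x => hm.differentiable one_ne_zero x
  have du1 : ∀ x, DifferentiableAt ℝ (fun y : ℝ × ℝ => (u y).1) x :=
    fun x => hu1.differentiable one_ne_zero x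
  have du2' : ∀ x, DifferentiableAt ℝ (fun y : ℝ × ℝ => (u y).2 - u_s) x :=
    fun x => hu2'.differentiable one_ne_zero x
  have dsnd : ∀ x : ℝ × ℝ, DifferentiableAt ℝ (fun y : ℝ × ℝ => y.2) x :=
    fun x => differentiableAt_snd
  have hcomp : ∀ x : ℝ × ℝ, d1 f x + d2 g x =
      ((d1 m x * (u x).1 + d2 m x * ((u x).2 - u_s)) * x.2 + m x * ((u x).2 - u_s))
        + x.2 * m x * div2 u x := by
    intro x
    have h1 : d1 f x = d1 (fun y : ℝ × ℝ => y.2) x * (m x * (u x).1)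
        + x.2 * (d1 m x * (u x).1 + m x * d1 (fun y : ℝ × ℝ => (u y).1) x) := by
      rw [hfdef, d1_mul (dsnd x) ((dm x).fun_mul (du1 x)), d1_mul (dm x) (du1 x)]
    have h2 : d2 g x = d2 (fun y : ℝ × ℝ => y.2) x * (m x * ((u x).2 - u_s))
        + x.2 * (d2 m x * ((u x).2 - u_s) + m x * d2 (fun y : ℝ × ℝ => (u y).2 - u_s) x) := by
      rw [hgdef, d2_mul (dsnd x) ((dm x).fun_mul (du2' x)), d2_mul (dm x) (du2' x)]
    rw [h1, h2, d1_snd, d2_snd, d2_sub_const]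
    simp only [div2]
    ring
  have Hdthm := integral2_divergence_prod_of_hasFDerivAt_off_countable f g
    (fun x => fderiv ℝ f x) (fun x => fderiv ℝ g x) 0 0 L 1 (∅ : Set (ℝ × ℝ))
    countable_empty hf.continuous.continuousOn hg.continuous.continuousOn
    (fun x _ => (hf.differentiable one_ne_zero x).hasFDerivAt)
    (fun x _ => (hg.differentiable one_ne_zero x).hasFDerivAt)
    (by
      show IntegrableOn (fun x => d1 f x + d2 g x) _ _
      rw [uIcc_of_le hL.le, uIcc_of_le (zero_le_one' ℝ)]
      exact integrableOn_rect' ((cont_d1 hf).add (cont_d2 hg)))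
  -- rewrite LHS of Hdthm
  have hLHS : (∫ x in (0:ℝ)..L, ∫ y in (0:ℝ)..1,
        fderiv ℝ f (x, y) ((1:ℝ), (0:ℝ)) + fderiv ℝ g (x, y) ((0:ℝ), (1:ℝ)))
      = ∫ x in Ioo 0 L ×ˢ Ioo (0 : ℝ) 1,
      ((d1 m x * (u x).1 + d2 m x * ((u x).2 - u_s)) * x.2 + m x * ((u x).2 - u_s)) := by
    rw [intervalIntegral.integral_of_le hL.le, integral_Ioc_eq_integral_Ioo]
    simp only [intervalIntegral.integral_of_le (zero_le_one' ℝ), integral_Ioc_eq_integral_Ioo]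
    have hi : IntegrableOn (fun x => d1 f x + d2 g x) (Ioo 0 L ×ˢ Ioo (0:ℝ) 1)
        (volume.prod volume) := by
      rw [← Measure.volume_eq_prod]
      exact integrableOn_rect ((cont_d1 hf).add (cont_d2 hg))
    have := (setIntegral_prod (fun x : ℝ × ℝ => d1 f x + d2 g x) hi).symm
    rw [← Measure.volume_eq_prod] at this
    rw [show (fun x:ℝ => ∫ y in Ioo (0:ℝ) 1, fderiv ℝ f (x, y) ((1:ℝ),(0:ℝ)) + fderiv ℝ g (x, y) ((0:ℝ),(1:ℝ))) = fun x : ℝ => ∫ y in Ioo (0:ℝ) 1, d1 f (x,y) + d2 g (x,y) from rfl] -- may fail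
    rw [this]
    refine setIntegral_congr_fun (measurableSet_Ioo.prod measurableSet_Ioo) fun x hx => ?_
    rw [hcomp x, hdiv x hx]
    ring
  have hB1 : (∫ x in (0:ℝ)..L, g (x, 1)) = -u_s * ∫ x in Ioo 0 L, m (x, 1) := by
    rw [intervalIntegral.integral_of_le hL.le]
    rw [setIntegral_congr_fun measurableSet_Ioc
      (fun x hx => by
        show g (x, 1) = -u_s * m (x, 1)
        rw [hgdef]
        simp only [htop x ⟨hx.1.le, hx.2⟩]
        ring)]
    rw [integral_const_mul, integral_Ioc_eq_integral_Ioo]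
  have hB2 : (∫ x in (0:ℝ)..L, g (x, 0)) = 0 := by
    simp [hgdef]
  have hB3 : (∫ y in (0:ℝ)..1, f (L, y)) = 0 := by
    rw [intervalIntegral.integral_of_le (zero_le_one' ℝ)]
    rw [setIntegral_congr_fun measurableSet_Ioc
      (fun y hy => by
        show f (L, y) = 0
        rw [hfdef]
        simp [hright y ⟨hy.1.le, hy.2⟩])]
    simp
  have hB4 : (∫ y in (0:ℝ)..1, f (0, y)) = 0 := by
    rw [intervalIntegral.integral_of_le (zero_le_one' ℝ)]
    rw [setIntegral_congr_fun measurableSet_Ioc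
      (fun y hy => by
        show f (0, y) = 0
        rw [hfdef]
        simp [hleft y ⟨hy.1.le, hy.2⟩])]
    simp
  rw [hLHS, hB1, hB2, hB3, hB4] at Hdthm
  linarith

/-- Discrete potential energy balance of the midpoint-rule (one-stage Gauss)
time discretization of the particle transport equation, tested against the
height `y`: the discrete potential energy changes exactly by the settling
dissipation `ε_s = u_s ∫_Ω m − κ ∫_Ω ∇m·e_g` and the buoyancy exchange term
`∫_Ω m (u·e_g)`, where `m = (φ₁ + φ₂)/2` and `u_p = u + u_s e_g`. -/
theorem discrete_potential_energy_balance
    (L u_s κ Δt : ℝ) (hL : 0 < L) (hκ : 0 < κ) (hΔt : 0 < Δt)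
    (u : ℝ × ℝ → ℝ × ℝ) (φ₁ φ₂ : ℝ × ℝ → ℝ)
    (hu : ContDiff ℝ 1 u) (hφ₁ : ContDiff ℝ 1 φ₁) (hφ₂ : ContDiff ℝ 1 φ₂)
    (hdiv : ∀ x ∈ Ioo 0 L ×ˢ Ioo (0 : ℝ) 1, div2 u x = 0)
    (hbottom : ∀ x ∈ Icc 0 L, (u (x, 0)).2 = 0)
    (htop : ∀ x ∈ Icc 0 L, (u (x, 1)).2 = 0)
    (hleft : ∀ y ∈ Icc (0 : ℝ) 1, (u (0, y)).1 = 0)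
    (hright : ∀ y ∈ Icc (0 : ℝ) 1, (u (L, y)).1 = 0)
    (htested :
      (∫ x in Ioo 0 L ×ˢ Ioo (0 : ℝ) 1, ((φ₂ x - φ₁ x) / Δt) * x.2)
        + (1 / 2) * (∫ x in Ioo 0 L ×ˢ Ioo (0 : ℝ) 1,
            div2 (fun y => ((φ₁ y + φ₂ y) / 2) • (u y + u_s • eg)) x * x.2)
        - (1 / 2) * (∫ x in Ioo 0 L ×ˢ Ioo (0 : ℝ) 1,
            ((φ₁ x + φ₂ x) / 2) * div2 (fun y => y.2 • (u y + u_s • eg)) x)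
        + (u_s / 2) * (∫ x in Ioo 0 L, (φ₁ (x, 1) + φ₂ (x, 1)) / 2)
      = -(κ * ∫ x in Ioo 0 L ×ˢ Ioo (0 : ℝ) 1,
            dot (grad (fun y => (φ₁ y + φ₂ y) / 2) x) (grad (fun z => z.2) x))) :
    (∫ x in Ioo 0 L ×ˢ Ioo (0 : ℝ) 1, φ₂ x * x.2)
      - (∫ x in Ioo 0 L ×ˢ Ioo (0 : ℝ) 1, φ₁ x * x.2)
    = -(Δt * ((u_s * ∫ x in Ioo 0 L ×ˢ Ioo (0 : ℝ) 1, (φ₁ x + φ₂ x) / 2)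
          - κ * ∫ x in Ioo 0 L ×ˢ Ioo (0 : ℝ) 1, dot (grad (fun y => (φ₁ y + φ₂ y) / 2) x) eg))
      - Δt * ∫ x in Ioo 0 L ×ˢ Ioo (0 : ℝ) 1, ((φ₁ x + φ₂ x) / 2) * dot (u x) eg := by
  have hmeas : MeasurableSet (Ioo 0 L ×ˢ Ioo (0 : ℝ) 1) :=
    measurableSet_Ioo.prod measurableSet_Ioo
  have hm : ContDiff ℝ 1 (fun y : ℝ × ℝ => (φ₁ y + φ₂ y) / 2) := (hφ₁.add hφ₂).div_const 2
  have hu1 : ContDiff ℝ 1 (fun y : ℝ × ℝ => (u y).1) := contDiff_fst.comp hu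
  have hu2 : ContDiff ℝ 1 (fun y : ℝ × ℝ => (u y).2) := contDiff_snd.comp hu
  have hu2' : ContDiff ℝ 1 (fun y : ℝ × ℝ => (u y).2 - u_s) := hu2.sub contDiff_const
  have dm : ∀ x, DifferentiableAt ℝ (fun y : ℝ × ℝ => (φ₁ y + φ₂ y) / 2) x :=
    fun x => hm.differentiable one_ne_zero x
  have du1 : ∀ x, DifferentiableAt ℝ (fun y : ℝ × ℝ => (u y).1) x :=
    fun x => hu1.differentiable one_ne_zero x
  have du2' : ∀ x, DifferentiableAt ℝ (fun y : ℝ × ℝ => (u y).2 - u_s) x :=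
    fun x => hu2'.differentiable one_ne_zero x
  have dsnd : ∀ x : ℝ × ℝ, DifferentiableAt ℝ (fun y : ℝ × ℝ => y.2) x :=
    fun x => differentiableAt_snd
  -- step 1: the time-difference term
  have hT1 : (∫ x in Ioo 0 L ×ˢ Ioo (0 : ℝ) 1, ((φ₂ x - φ₁ x) / Δt) * x.2)
      = Δt⁻¹ * ((∫ x in Ioo 0 L ×ˢ Ioo (0 : ℝ) 1, φ₂ x * x.2)
          - ∫ x in Ioo 0 L ×ˢ Ioo (0 : ℝ) 1, φ₁ x * x.2) := by
    have e : (fun x : ℝ × ℝ => ((φ₂ x - φ₁ x) / Δt) * x.2)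
        = fun x => Δt⁻¹ * (φ₂ x * x.2 - φ₁ x * x.2) := by funext x; ring
    rw [e, integral_const_mul, integral_sub
      (integrableOn_rect (hφ₂.continuous.fun_mul continuous_snd))
      (integrableOn_rect (hφ₁.continuous.fun_mul continuous_snd))]
  -- step 2: first convection term, pointwise
  have hA : (∫ x in Ioo 0 L ×ˢ Ioo (0 : ℝ) 1,
        div2 (fun y => ((φ₁ y + φ₂ y) / 2) • (u y + u_s • eg)) x * x.2)
      = ∫ x in Ioo 0 L ×ˢ Ioo (0 : ℝ) 1,
        (d1 (fun y => (φ₁ y + φ₂ y) / 2) x * (u x).1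
          + d2 (fun y => (φ₁ y + φ₂ y) / 2) x * ((u x).2 - u_s)) * x.2 := by
    refine setIntegral_congr_fun hmeas fun x hx => ?_
    have h0 := hdiv x hx
    simp only [div2] at h0 ⊢
    have e1 : (fun y : ℝ × ℝ => (((φ₁ y + φ₂ y) / 2) • (u y + u_s • eg)).1)
        = fun y : ℝ × ℝ => ((φ₁ y + φ₂ y) / 2) * (u y).1 := by
      funext y; simp [eg]
    have e2 : (fun y : ℝ × ℝ => (((φ₁ y + φ₂ y) / 2) • (u y + u_s • eg)).2)
        = fun y : ℝ × ℝ => ((φ₁ y + φ₂ y) / 2) * ((u y).2 - u_s) := by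
      funext y; simp [eg]; ring
    rw [e1, e2, d1_mul (dm x) (du1 x), d2_mul (dm x) (du2' x), d2_sub_const]
    linear_combination x.2 * ((φ₁ x + φ₂ x) / 2) * h0
  -- step 3: second convection term, pointwise
  have hB : (∫ x in Ioo 0 L ×ˢ Ioo (0 : ℝ) 1,
        ((φ₁ x + φ₂ x) / 2) * div2 (fun y => y.2 • (u y + u_s • eg)) x)
      = ∫ x in Ioo 0 L ×ˢ Ioo (0 : ℝ) 1, ((φ₁ x + φ₂ x) / 2) * ((u x).2 - u_s) := by
    refine setIntegral_congr_fun hmeas fun x hx => ?_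
    have h0 := hdiv x hx
    simp only [div2] at h0 ⊢
    have e1 : (fun y : ℝ × ℝ => (y.2 • (u y + u_s • eg)).1)
        = fun y : ℝ × ℝ => y.2 * (u y).1 := by funext y; simp [eg]
    have e2 : (fun y : ℝ × ℝ => (y.2 • (u y + u_s • eg)).2)
        = fun y : ℝ × ℝ => y.2 * ((u y).2 - u_s) := by funext y; simp [eg]; ring
    rw [e1, e2, d1_mul (dsnd x) (du1 x), d2_mul (dsnd x) (du2' x), d2_sub_const,
      d1_snd, d2_snd]
    linear_combination ((φ₁ x + φ₂ x) / 2) * x.2 * h0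
  -- step 4: right-hand side gradient term
  have hR : (∫ x in Ioo 0 L ×ˢ Ioo (0 : ℝ) 1,
        dot (grad (fun y => (φ₁ y + φ₂ y) / 2) x) (grad (fun z => z.2) x))
      = ∫ x in Ioo 0 L ×ˢ Ioo (0 : ℝ) 1, d2 (fun y => (φ₁ y + φ₂ y) / 2) x := by
    refine setIntegral_congr_fun hmeas fun x _ => ?_
    simp [dot, grad, d1_snd, d2_snd]
  -- step 5: goal-side gradient term
  have hG1 : (∫ x in Ioo 0 L ×ˢ Ioo (0 : ℝ) 1,
        dot (grad (fun y => (φ₁ y + φ₂ y) / 2) x) eg)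
      = -∫ x in Ioo 0 L ×ˢ Ioo (0 : ℝ) 1, d2 (fun y => (φ₁ y + φ₂ y) / 2) x := by
    rw [← integral_neg]
    refine setIntegral_congr_fun hmeas fun x _ => ?_
    simp [dot, grad, eg]
  -- step 6: goal-side buoyancy term
  have hG2 : (∫ x in Ioo 0 L ×ˢ Ioo (0 : ℝ) 1, ((φ₁ x + φ₂ x) / 2) * dot (u x) eg)
      = -∫ x in Ioo 0 L ×ˢ Ioo (0 : ℝ) 1, ((φ₁ x + φ₂ x) / 2) * (u x).2 := by
    rw [← integral_neg]
    refine setIntegral_congr_fun hmeas fun x _ => ?_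
    simp [dot, eg]
  -- step 7: split ∫ m ((u)₂ - u_s)
  have hS : (∫ x in Ioo 0 L ×ˢ Ioo (0 : ℝ) 1, ((φ₁ x + φ₂ x) / 2) * ((u x).2 - u_s))
      = (∫ x in Ioo 0 L ×ˢ Ioo (0 : ℝ) 1, ((φ₁ x + φ₂ x) / 2) * (u x).2)
        - u_s * ∫ x in Ioo 0 L ×ˢ Ioo (0 : ℝ) 1, (φ₁ x + φ₂ x) / 2 := by
    have e : (fun x : ℝ × ℝ => ((φ₁ x + φ₂ x) / 2) * ((u x).2 - u_s))
        = fun x => ((φ₁ x + φ₂ x) / 2) * (u x).2 - u_s * ((φ₁ x + φ₂ x) / 2) := by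
      funext x; ring
    rw [e, integral_sub (integrableOn_rect (hm.continuous.fun_mul hu.continuous.snd))
      (integrableOn_rect (continuous_const.fun_mul hm.continuous)), integral_const_mul]
  -- step 8: divergence theorem
  have hKD : (∫ x in Ioo 0 L ×ˢ Ioo (0 : ℝ) 1,
        ((d1 (fun y => (φ₁ y + φ₂ y) / 2) x * (u x).1
          + d2 (fun y => (φ₁ y + φ₂ y) / 2) x * ((u x).2 - u_s)) * x.2
          + ((φ₁ x + φ₂ x) / 2) * ((u x).2 - u_s)))
      = -u_s * ∫ x in Ioo 0 L, (φ₁ (x, 1) + φ₂ (x, 1)) / 2 :=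
    key_div L u_s hL u (fun y => (φ₁ y + φ₂ y) / 2) hu hm hdiv htop hleft hright
  have hsplit : (∫ x in Ioo 0 L ×ˢ Ioo (0 : ℝ) 1,
        ((d1 (fun y => (φ₁ y + φ₂ y) / 2) x * (u x).1
          + d2 (fun y => (φ₁ y + φ₂ y) / 2) x * ((u x).2 - u_s)) * x.2
          + ((φ₁ x + φ₂ x) / 2) * ((u x).2 - u_s)))
      = (∫ x in Ioo 0 L ×ˢ Ioo (0 : ℝ) 1,
          (d1 (fun y => (φ₁ y + φ₂ y) / 2) x * (u x).1
            + d2 (fun y => (φ₁ y + φ₂ y) / 2) x * ((u x).2 - u_s)) * x.2)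
        + ∫ x in Ioo 0 L ×ˢ Ioo (0 : ℝ) 1, ((φ₁ x + φ₂ x) / 2) * ((u x).2 - u_s) := by
    refine integral_add ?_ ?_
    · exact integrableOn_rect ((((cont_d1 hm).mul hu.continuous.fst).add
        ((cont_d2 hm).mul (hu.continuous.snd.sub continuous_const))).mul
        continuous_snd)
    · exact integrableOn_rect (hm.continuous.mul (hu.continuous.snd.sub continuous_const))
  rw [hT1, hA, hB, hR, hS] at htested
  rw [hsplit, hS] at hKD
  rw [hG1, hG2]
  have hΔ : Δt ≠ 0 := ne_of_gt hΔt
  have h10 : Δt * (Δt⁻¹ * ((∫ x in Ioo 0 L ×ˢ Ioo (0 : ℝ) 1, φ₂ x * x.2)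
      - ∫ x in Ioo 0 L ×ˢ Ioo (0 : ℝ) 1, φ₁ x * x.2))
      = (∫ x in Ioo 0 L ×ˢ Ioo (0 : ℝ) 1, φ₂ x * x.2)
        - ∫ x in Ioo 0 L ×ˢ Ioo (0 : ℝ) 1, φ₁ x * x.2 := by
    field_simp
  linear_combination Δt * htested - (Δt / 2) * hKD - h10
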